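/- Let q ≡ 3 (mod 4) be a prime power and α a primitive element of the finite field F_q. Then D = {(0, α^{2i}, α^{2i+1}, ..., α^{2i+q-2}) : i = 0,...,(q-3)/2} ⊆ (F_q)^q is a q-dimensional (q, (q-1)/2, (q-3)/4) difference set in the additive group of F_q; i.e., for all 1 ≤ x < y ≤ q, the set of coordinate differences {d_x − d_y : d ∈ D} is a (q, (q-1)/2, (q-3)/4) difference set in (F_q, +). -/

import Mathlib

open Finset

/-- A (v,k,λ) difference set in an additive group G: a k-subset D such that every
nonzero g has exactly λ representations g = d₁ - d₂ with d₁,d₂ ∈ D. -/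
def IsAddDiffSet {G : Type*} [AddGroup G] [DecidableEq G] (v k lam : ℕ)
    (D : Finset G) : Prop :=
  D.card = k ∧ ∀ g : G, g ≠ 0 →
    ((D ×ˢ D).filter (fun p => p.1 - p.2 = g)).card = lam

/-- An n-dimensional (v,k,λ) difference set in an additive group G. -/
def IsAddDiffSetN {G : Type*} [AddGroup G] [DecidableEq G] (n v k lam : ℕ)
    (D : Finset (Fin n → G)) : Prop :=
  D.card = k ∧ ∀ x y : Fin n, x < y →
    IsAddDiffSet v k lam (D.image (fun d => d x - d y))


private lemma sum_shift {F : Type*} [Field F] [Fintype F] [DecidableEq F]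
    (hF : ringChar F ≠ 2) {g : F} (hg : g ≠ 0) :
    ∑ b ∈ Finset.univ.erase (0 : F), quadraticChar F (b * (b + g)) = -1 := by
  have h2 : ∑ b ∈ Finset.univ.erase (0:F), quadraticChar F (b * (b + g))
      = ∑ t ∈ Finset.univ.erase (1:F), quadraticChar F t := by
    refine Finset.sum_nbij' (fun b => 1 + g * b⁻¹) (fun t => g * (t - 1)⁻¹) ?_ ?_ ?_ ?_ ?_
    · intro b hb
      have hb0 : b ≠ 0 := (Finset.mem_erase.mp hb).1
      simp only [Finset.mem_erase, Finset.mem_univ, and_true]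
      intro h
      have : g * b⁻¹ = 0 := by linear_combination h
      exact hg (by simpa [hb0] using this)
    · intro t ht
      have ht1 : t ≠ 1 := (Finset.mem_erase.mp ht).1
      simp only [Finset.mem_erase, Finset.mem_univ, and_true]
      exact mul_ne_zero hg (inv_ne_zero (sub_ne_zero.mpr ht1))
    · intro b hb
      have hb0 : b ≠ 0 := (Finset.mem_erase.mp hb).1
      field_simp
      simp [hg]
    · intro t ht
      have ht1 : t ≠ 1 := (Finset.mem_erase.mp ht).1
      have : t - 1 ≠ 0 := sub_ne_zero.mpr ht1
      field_simp
      ring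
    · intro b hb
      have hb0 : b ≠ 0 := (Finset.mem_erase.mp hb).1
      have : b * (b + g) = b ^ 2 * (1 + g * b⁻¹) := by field_simp
      rw [this, map_mul, quadraticChar_sq_one' hb0, one_mul]
  rw [h2]
  have h3 := Finset.add_sum_erase Finset.univ (fun t => quadraticChar F t)
    (Finset.mem_univ (1:F))
  rw [quadraticChar_sum_zero hF] at h3
  simp only [map_one] at h3
  linarith [h3]


private lemma paley_T {F : Type*} [Field F] [Fintype F] [DecidableEq F]
    (q : ℕ) (hq : Fintype.card F = q) (h4 : q % 4 = 3) {g : F} (hg : g ≠ 0) :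
    (Finset.univ.filter
      (fun b : F => (b ≠ 0 ∧ IsSquare b) ∧ (b + g ≠ 0 ∧ IsSquare (b + g)))).card
      = (q - 3) / 4 := by
  have hF : ringChar F ≠ 2 := by
    intro h
    have := FiniteField.even_card_of_char_two h
    rw [hq] at this; omega
  set χ := quadraticChar F with hχ
  set T := Finset.univ.filter
      (fun b : F => (b ≠ 0 ∧ IsSquare b) ∧ (b + g ≠ 0 ∧ IsSquare (b + g))) with hT
  set s := (Finset.univ.erase (0:F)).erase (-g) with hs
  have hmem : ∀ b : F, b ∈ s ↔ b ≠ -g ∧ b ≠ 0 := by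
    intro b; simp [hs, Finset.mem_erase]
  -- χ (-1) = -1
  have hm1 : χ (-1) = -1 := by
    rw [hχ, quadraticChar_neg_one hF, hq, ZMod.χ₄_nat_three_mod_four h4]
  have hmg : χ (-g) = - χ g := by
    rw [show (-g : F) = -1 * g by ring, map_mul, hm1]; ring
  -- T as filter of s
  have hTs : T = s.filter (fun b => IsSquare b ∧ IsSquare (b + g)) := by
    ext b
    simp only [hT, Finset.mem_filter, Finset.mem_univ, true_and, hmem b]
    constructor
    · rintro ⟨⟨h1, h2⟩, h3, h4⟩
      exact ⟨⟨fun hb => h3 (by rw [hb]; ring), h1⟩, h2, h4⟩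
    · rintro ⟨⟨h1, h2⟩, h3, h4⟩
      exact ⟨⟨h2, h3⟩, fun hb => h1 (by linear_combination hb), h4⟩
  -- key sum identity
  have key : ∑ b ∈ s, (1 + χ b) * (1 + χ (b + g)) = 4 * (T.card : ℤ) := by
    rw [hTs, ← Finset.sum_filter_add_sum_filter_not s
      (fun b => IsSquare b ∧ IsSquare (b + g))]
    have e1 : ∑ b ∈ s.filter (fun b => IsSquare b ∧ IsSquare (b + g)),
        (1 + χ b) * (1 + χ (b + g)) = 4 * ((s.filter (fun b => IsSquare b ∧ IsSquare (b + g))).card : ℤ) := by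
      have step : ∀ b ∈ s.filter (fun b => IsSquare b ∧ IsSquare (b + g)),
          (1 + χ b) * (1 + χ (b + g)) = (4 : ℤ) := by
        intro b hb
        simp only [Finset.mem_filter, hmem b] at hb
        obtain ⟨⟨hg1, hb0⟩, hsq1, hsq2⟩ := hb
        have hbg0 : b + g ≠ 0 := fun h => hg1 (by linear_combination h)
        rw [show χ b = 1 from (quadraticChar_one_iff_isSquare hb0).mpr hsq1,
          show χ (b + g) = 1 from (quadraticChar_one_iff_isSquare hbg0).mpr hsq2]
        norm_num
      rw [Finset.sum_congr rfl step, Finset.sum_const, nsmul_eq_mul]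
      ring
    have e2 : ∑ b ∈ s.filter (fun b => ¬(IsSquare b ∧ IsSquare (b + g))),
        (1 + χ b) * (1 + χ (b + g)) = 0 := by
      apply Finset.sum_eq_zero
      intro b hb
      simp only [Finset.mem_filter, hmem b] at hb
      obtain ⟨⟨hg1, hb0⟩, hns⟩ := hb
      rcases not_and_or.mp hns with h | h
      · rw [quadraticChar_neg_one_iff_not_isSquare.mpr h]; ring
      · rw [quadraticChar_neg_one_iff_not_isSquare.mpr h]; ring
    rw [e1, e2]; ring
  -- expand the sum
  have expand : ∑ b ∈ s, (1 + χ b) * (1 + χ (b + g))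
      = (s.card : ℤ) + (∑ b ∈ s, χ b) + (∑ b ∈ s, χ (b + g)) + ∑ b ∈ s, χ b * χ (b + g) := by
    rw [Finset.sum_congr rfl (fun b _ => show (1 + χ b) * (1 + χ (b + g))
      = 1 + χ b + χ (b + g) + χ b * χ (b + g) by ring)]
    simp [Finset.sum_add_distrib]
  -- card s
  have hmgmem : (-g : F) ∈ Finset.univ.erase (0:F) :=
    Finset.mem_erase.mpr ⟨neg_ne_zero.mpr hg, Finset.mem_univ _⟩
  have hcards : s.card = q - 2 := by
    rw [hs, Finset.card_erase_of_mem hmgmem,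
      Finset.card_erase_of_mem (Finset.mem_univ _), Finset.card_univ, hq]
    omega
  -- S1
  have hχ0 : χ (0 : F) = 0 := quadraticChar_zero
  have hS1 : ∑ b ∈ s, χ b = χ g := by
    have h1 := Finset.add_sum_erase (Finset.univ.erase (0:F)) (fun b => χ b) hmgmem
    have h2 := Finset.add_sum_erase Finset.univ (fun b => χ b) (Finset.mem_univ (0:F))
    rw [quadraticChar_sum_zero hF] at h2
    rw [← hs] at h1
    have : ∑ b ∈ s, χ b = - χ (-g) := by linarith [hχ0]
    rw [this, hmg]; ring
  -- S2
  have hS2 : ∑ b ∈ s, χ (b + g) = - χ g := by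
    have hre : ∑ b ∈ s, χ (b + g) = ∑ t ∈ (Finset.univ.erase (g:F)).erase 0, χ t := by
      refine Finset.sum_nbij' (fun b => b + g) (fun t => t - g) ?_ ?_ ?_ ?_ ?_
      · intro b hb
        rw [hmem b] at hb
        simp only [Finset.mem_erase, Finset.mem_univ, and_true]
        constructor
        · intro h; exact hb.1 (by linear_combination h)
        · intro h; exact hb.2 (by linear_combination h)
      · intro t ht
        simp only [Finset.mem_erase, Finset.mem_univ, and_true] at ht
        rw [hmem]
        constructor
        · intro h; exact ht.1 (by linear_combination h)
        · intro h; exact ht.2 (by linear_combination h)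
      · intro b _; ring
      · intro t _; ring
      · intro b _; rfl
    rw [hre]
    have h1 := Finset.add_sum_erase (Finset.univ.erase (g:F)) (fun b => χ b)
      (Finset.mem_erase.mpr ⟨by simpa using (Ne.symm hg), Finset.mem_univ _⟩)
    have h2 := Finset.add_sum_erase Finset.univ (fun b => χ b) (Finset.mem_univ (g:F))
    rw [quadraticChar_sum_zero hF] at h2
    have hχg : χ (g : F) = quadraticChar F g := rfl
    linarith [hχ0]
  -- S3
  have hS3 : ∑ b ∈ s, χ b * χ (b + g) = -1 := by
    have h0 : ∀ b ∈ s, χ b * χ (b + g) = χ (b * (b + g)) := fun b _ => (map_mul χ _ _).symm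
    rw [Finset.sum_congr rfl h0]
    have h1 := Finset.add_sum_erase (Finset.univ.erase (0:F)) (fun b => χ (b * (b + g)))
      (Finset.mem_erase.mpr ⟨neg_ne_zero.mpr hg, Finset.mem_univ _⟩)
    rw [← hs] at h1
    simp only [neg_add_cancel, mul_zero] at h1
    rw [hχ0, zero_add] at h1
    rw [h1]
    exact sum_shift hF hg
  have hq3 : 3 ≤ q := by omega
  have hfinal : (4 : ℤ) * (T.card : ℤ) = (q : ℤ) - 3 := by
    rw [← key, expand, hS1, hS2, hS3, hcards]
    push_cast [show 2 ≤ q by omega]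
    ring
  have : (T.card : ℤ) * 4 = ((q - 3 : ℕ) : ℤ) := by
    push_cast [hq3]; linarith
  have hnat : T.card * 4 = q - 3 := by exact_mod_cast this
  omega


private lemma paley_pairs {F : Type*} [Field F] [Fintype F] [DecidableEq F]
    (q : ℕ) (hq : Fintype.card F = q) (h4 : q % 4 = 3) {c g : F} (hc : c ≠ 0) (hg : g ≠ 0) :
    ((((Finset.univ.filter (fun x : F => x ≠ 0 ∧ IsSquare x)).image (c * ·)) ×ˢ
      ((Finset.univ.filter (fun x : F => x ≠ 0 ∧ IsSquare x)).image (c * ·))).filter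
      (fun p => p.1 - p.2 = g)).card = (q - 3) / 4 := by
  have hg' : c⁻¹ * g ≠ 0 := mul_ne_zero (inv_ne_zero hc) hg
  rw [← paley_T q hq h4 hg']
  apply Finset.card_nbij' (fun p => c⁻¹ * p.2) (fun b => (c * b + g, c * b))
  · rintro ⟨a, b⟩ hp
    rw [Finset.mem_coe] at hp
    simp only [Finset.mem_coe, Finset.mem_filter, Finset.mem_product, Finset.mem_image, Finset.mem_univ,
      true_and] at hp ⊢
    obtain ⟨⟨⟨s1, hs1, ha⟩, ⟨s2, hs2, hb⟩⟩, hdiff⟩ := hp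
    have h1 : c⁻¹ * b = s2 := by rw [← hb]; field_simp
    have h2 : s2 + c⁻¹ * g = s1 := by
      apply mul_left_cancel₀ hc
      rw [mul_add, hb, mul_inv_cancel_left₀ hc, ha]
      linear_combination -hdiff
    rw [h1, h2]
    exact ⟨hs2, hs1⟩
  · rintro b hb
    simp only [Finset.mem_coe, Finset.mem_filter, Finset.mem_univ, true_and] at hb
    obtain ⟨⟨hb0, hbsq⟩, hbg0, hbgsq⟩ := hb
    apply Finset.mem_coe.mpr
    simp only [Finset.mem_filter, Finset.mem_product, Finset.mem_image, Finset.mem_univ,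
      true_and]
    refine ⟨⟨⟨b + c⁻¹ * g, ⟨hbg0, hbgsq⟩, by rw [mul_add, mul_inv_cancel_left₀ hc]⟩, ⟨b, ⟨hb0, hbsq⟩, rfl⟩⟩, by ring⟩
  · rintro ⟨a, b⟩ hp
    simp only [Finset.mem_coe, Finset.mem_filter] at hp
    have hdiff : a - b = g := hp.2
    have : a = b + g := by linear_combination hdiff
    simp only [Prod.mk.injEq]
    constructor
    · rw [this]; field_simp
    · field_simp
  · intro b _
    field_simp

theorem paley_qdim_diffSet {F : Type*} [Field F] [Fintype F] [DecidableEq F]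
    (q : ℕ) (hq : Fintype.card F = q) (h4 : q % 4 = 3)
    (α : F) (hα : ∀ x : F, x ≠ 0 → ∃ m : ℕ, α ^ m = x) :
    IsAddDiffSetN q q ((q - 1) / 2) ((q - 3) / 4)
      ((Finset.range ((q - 3) / 2 + 1)).image
        (fun i => fun x : Fin q =>
          if (x : ℕ) = 0 then (0 : F) else α ^ (2 * i + (x : ℕ) - 1))) := by
  have hq3 : 3 ≤ q := by omega
  have hF2 : ringChar F ≠ 2 := by
    intro h
    have := FiniteField.even_card_of_char_two h
    rw [hq] at this; omega
  have hα0 : α ≠ 0 := by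
    intro h
    obtain ⟨m, hm⟩ := hα 2 (Ring.two_ne_zero hF2)
    rcases Nat.eq_zero_or_pos m with hm0 | hm0
    · rw [hm0, pow_zero] at hm
      exact (one_ne_zero : (1 : F) ≠ 0) (by linear_combination -hm)
    · rw [h, zero_pow hm0.ne'] at hm
      exact Ring.two_ne_zero hF2 hm.symm
  set u : Fˣ := Units.mk0 α hα0 with hu
  have hordu : orderOf u = q - 1 := by
    have h1 : ∀ x : Fˣ, x ∈ Subgroup.zpowers u := by
      intro x
      obtain ⟨m, hm⟩ := hα x.val x.ne_zero
      refine ⟨(m : ℤ), ?_⟩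
      show u ^ (m : ℤ) = x
      rw [zpow_natCast]
      ext
      rw [Units.val_pow_eq_pow_val]
      exact hm
    rw [orderOf_eq_card_of_forall_mem_zpowers h1, Nat.card_eq_fintype_card,
      Fintype.card_units, hq]
  have hpow : ∀ a b : ℕ, (α ^ a = α ^ b ↔ a % (q - 1) = b % (q - 1)) := by
    intro a b
    have hva : α ^ a = ((u ^ a : Fˣ) : F) := by rw [Units.val_pow_eq_pow_val]; rfl
    have hvb : α ^ b = ((u ^ b : Fˣ) : F) := by rw [Units.val_pow_eq_pow_val]; rfl
    rw [hva, hvb, ← Units.ext_iff, pow_eq_pow_iff_modEq, hordu]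
    rfl
  set Sq := Finset.univ.filter (fun x : F => x ≠ 0 ∧ IsSquare x) with hSq
  have himg : (Finset.range ((q - 1) / 2)).image (fun i => α ^ (2 * i)) = Sq := by
    ext z
    simp only [hSq, Finset.mem_image, Finset.mem_range, Finset.mem_filter, Finset.mem_univ,
      true_and]
    constructor
    · rintro ⟨i, hi, rfl⟩
      exact ⟨pow_ne_zero _ hα0, ⟨α ^ i, by rw [← pow_add, two_mul]⟩⟩
    · rintro ⟨hz0, y, hy⟩
      have hy0 : y ≠ 0 := by rintro rfl; rw [mul_zero] at hy; exact hz0 hy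
      obtain ⟨m, rfl⟩ := hα y hy0
      refine ⟨m % ((q - 1) / 2), Nat.mod_lt _ (by omega), ?_⟩
      rw [hy, ← pow_add, hpow]
      have h1 : (m % ((q - 1) / 2)) ≡ m [MOD ((q - 1) / 2)] := Nat.mod_modEq m _
      have h2 := h1.mul_left' (c := 2)
      rw [show 2 * ((q - 1) / 2) = q - 1 from by omega] at h2
      rw [show m + m = 2 * m from by ring]
      exact h2
  have hinj : Set.InjOn (fun i => α ^ (2 * i)) (Finset.range ((q - 1) / 2)) := by
    intro a ha b hb hab
    simp only [Finset.coe_range, Set.mem_Iio] at ha hb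
    simp only at hab
    rw [hpow, Nat.mod_eq_of_lt (by omega), Nat.mod_eq_of_lt (by omega)] at hab
    omega
  have hcardSq : Sq.card = (q - 1) / 2 := by
    rw [← himg, Finset.card_image_of_injOn hinj, Finset.card_range]
  have hN : (q - 3) / 2 + 1 = (q - 1) / 2 := by omega
  have hx1 : (1 : ℕ) < q := by omega
  constructor
  · -- card of D
    rw [Finset.card_image_of_injOn, Finset.card_range, hN]
    intro a ha b hb hab
    simp only [Finset.coe_range, Set.mem_Iio] at ha hb
    have := congrFun hab (⟨1, hx1⟩ : Fin q)
    simp only [Fin.val_mk, one_ne_zero, if_false] at this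
    rw [show 2 * a + 1 - 1 = 2 * a from by omega, show 2 * b + 1 - 1 = 2 * b from by omega,
      hpow, Nat.mod_eq_of_lt (by omega), Nat.mod_eq_of_lt (by omega)] at this
    omega
  · intro x y hxy
    have hyv : (x : ℕ) < (y : ℕ) := hxy
    have hyq : (y : ℕ) ≤ q - 1 := by have := y.isLt; omega
    set c : F := if (x : ℕ) = 0 then -α ^ ((y : ℕ) - 1)
      else α ^ ((x : ℕ) - 1) - α ^ ((y : ℕ) - 1) with hc
    have hc0 : c ≠ 0 := by
      rw [hc]
      split
      · exact neg_ne_zero.mpr (pow_ne_zero _ hα0)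
      · next hx0 =>
        apply sub_ne_zero.mpr
        intro hcontra
        rw [hpow, Nat.mod_eq_of_lt (by omega), Nat.mod_eq_of_lt (by omega)] at hcontra
        omega
    have himage :
        (((Finset.range ((q - 3) / 2 + 1)).image
          (fun i => fun z : Fin q =>
            if (z : ℕ) = 0 then (0 : F) else α ^ (2 * i + (z : ℕ) - 1))).image
          (fun d => d x - d y)) = Sq.image (c * ·) := by
      rw [Finset.image_image]
      have heq : ∀ i ∈ Finset.range ((q - 3) / 2 + 1),
          ((fun d : Fin q → F => d x - d y) ∘
            (fun i => fun z : Fin q =>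
              if (z : ℕ) = 0 then (0 : F) else α ^ (2 * i + (z : ℕ) - 1))) i
          = ((c * ·) ∘ (fun i => α ^ (2 * i))) i := by
        intro i _
        simp only [Function.comp_apply]
        have hyne : ¬((y : ℕ) = 0) := by omega
        rw [if_neg hyne]
        by_cases hx0 : (x : ℕ) = 0
        · rw [if_pos hx0, hc, if_pos hx0]
          rw [show 2 * i + (y : ℕ) - 1 = ((y : ℕ) - 1) + 2 * i from by omega, pow_add]
          ring
        · rw [if_neg hx0, hc, if_neg hx0]
          rw [show 2 * i + (x : ℕ) - 1 = ((x : ℕ) - 1) + 2 * i from by omega,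
            show 2 * i + (y : ℕ) - 1 = ((y : ℕ) - 1) + 2 * i from by omega,
            pow_add, pow_add]
          ring
      rw [Finset.image_congr heq, ← Finset.image_image, hN, himg]
    constructor
    · rw [himage, Finset.card_image_of_injective _ (mul_right_injective₀ hc0), hcardSq]
    · intro g hg
      rw [himage]
      exact paley_pairs q hq h4 hc0 hg
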